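/- Let F(q) be a convergent power series in k complex variables on a domain Ω containing 0, and let G(h) be a polynomial in k variables. Then for q ∈ Ω and h ∈ ℂᵏ, one has F(∂/∂h)[G(h)·exp(∑_{j=1}^k qⱼhⱼ)] = G(∂/∂q)[F(q)·exp(∑_{j=1}^k qⱼhⱼ)], i.e., applying the infinite-order differential operator F(∂/∂h) to G(h)e^{⟨q,h⟩} and evaluating gives the same result as applying G(∂/∂q) to F(q)e^{⟨q,h⟩}. -/

import Mathlib

/-- Partial derivative of a function of `k` complex variables in the `j`-th coordinate
direction. -/
noncomputable def pderivC {k : ℕ} (j : Fin k) (f : (Fin k → ℂ) → ℂ) : (Fin k → ℂ) → ℂ :=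
  fun x => fderiv ℂ f x (Pi.single j 1)

/-- Iterated partial derivative `∂^β = ∂^{β₁}/∂x₁^{β₁} ⋯ ∂^{βₖ}/∂xₖ^{βₖ}` indexed by a
multi-index `β`. -/
noncomputable def mderivC {k : ℕ} (β : Fin k → ℕ) (f : (Fin k → ℂ) → ℂ) : (Fin k → ℂ) → ℂ :=
  (List.finRange k).foldr (fun j g => (pderivC j)^[β j] g) f


open Polynomial Complex Function Finset

noncomputable def Complex.abs : AbsoluteValue ℂ ℝ := IsAbsoluteValue.toAbsoluteValue (norm : ℂ → ℝ)

lemma Complex.norm_eq_abs (z : ℂ) : ‖z‖ = Complex.abs z := rfl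

lemma Complex.abs_ofReal (x : ℝ) : Complex.abs (x : ℂ) = |x| := by
  show ‖(x : ℂ)‖ = |x|
  simp

lemma Complex.abs_natCast (n : ℕ) : Complex.abs (n : ℂ) = n := by
  show ‖(n : ℂ)‖ = n
  simp

lemma Complex.abs_exp (z : ℂ) : Complex.abs (Complex.exp z) = Real.exp z.re :=
  Complex.norm_exp z

lemma Complex.re_le_abs (z : ℂ) : z.re ≤ Complex.abs z :=
  Complex.re_le_norm z

lemma Complex.continuous_abs : Continuous Complex.abs :=
  continuous_norm

lemma Complex.dist_eq_abs (z w : ℂ) : dist z w = Complex.abs (z - w) :=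
  Complex.dist_eq z w

/-- one-variable building block: `p(t) * exp (s*t)` -/
noncomputable def pe (s : ℂ) (p : Polynomial ℂ) : ℂ → ℂ :=
  fun t => p.eval t * Complex.exp (s * t)

/-- the operator `p ↦ p' + s p`, so that `(pe s p)' = pe s (Tp s p)`. -/
noncomputable def Tp (s : ℂ) (p : Polynomial ℂ) : Polynomial ℂ :=
  p.derivative + Polynomial.C s * p

lemma pe_hasDerivAt (s : ℂ) (p : Polynomial ℂ) (t : ℂ) :
    HasDerivAt (pe s p) (pe s (Tp s p) t) t := by
  have h2 : HasDerivAt (fun t : ℂ => Complex.exp (s * t)) (s * Complex.exp (s * t)) t := by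
    simpa [mul_comm] using (((hasDerivAt_id t).const_mul s).cexp)
  have := (p.hasDerivAt t).fun_mul h2
  refine HasDerivAt.congr_deriv (f := pe s p) this ?_
  simp [pe, Tp]
  ring

lemma key_alg (s t : ℂ) (n m : ℕ) :
    (∑ i ∈ Finset.range (n+1), (n.choose i : ℂ) * (m.descFactorial i : ℂ) * s^(n-i) *
        (((m-i : ℕ) : ℂ) * t^(m-i-1)))
      + s * (∑ i ∈ Finset.range (n+1), (n.choose i : ℂ) * (m.descFactorial i : ℂ) * s^(n-i) * t^(m-i))
    = ∑ i ∈ Finset.range (n+2), ((n+1).choose i : ℂ) * (m.descFactorial i : ℂ) * s^(n+1-i) * t^(m-i) := by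
  -- expand RHS: split off i = 0
  rw [Finset.sum_range_succ' (fun i => ((n+1).choose i : ℂ) * (m.descFactorial i : ℂ) * s^(n+1-i) * t^(m-i)) (n+1)]
  -- expand second sum on LHS : split off i = 0, and move s inside
  rw [Finset.mul_sum, Finset.sum_range_succ' (fun i => s * ((n.choose i : ℂ) * (m.descFactorial i : ℂ) * s^(n-i) * t^(m-i))) n]
  have ext : ∑ i ∈ Finset.range n, s * ((n.choose (i+1) : ℂ) * (m.descFactorial (i+1) : ℂ) * s^(n-(i+1)) * t^(m-(i+1)))
      = ∑ i ∈ Finset.range (n+1), (n.choose (i+1) : ℂ) * (m.descFactorial (i+1) : ℂ) * s^(n-i) * t^(m-(i+1)) := by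
    rw [Finset.sum_range_succ]
    rw [Nat.choose_succ_self, Nat.cast_zero]
    rw [Finset.sum_congr rfl (fun i hi => ?_)]
    · ring
    · have hi' : i + 1 ≤ n := Nat.succ_le_of_lt (Finset.mem_range.mp hi)
      have : n - (i+1) + 1 = n - i := by omega
      rw [← this, pow_succ]
      ring
  rw [ext]
  rw [← add_assoc, ← Finset.sum_add_distrib]
  have congr1 : ∀ i ∈ Finset.range (n+1),
      (n.choose i : ℂ) * (m.descFactorial i : ℂ) * s^(n-i) * (((m-i : ℕ) : ℂ) * t^(m-i-1))
        + (n.choose (i+1) : ℂ) * (m.descFactorial (i+1) : ℂ) * s^(n-i) * t^(m-(i+1))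
      = ((n+1).choose (i+1) : ℂ) * (m.descFactorial (i+1) : ℂ) * s^(n+1-(i+1)) * t^(m-(i+1)) := by
    intro i hi
    have h1 : (n+1).choose (i+1) = n.choose i + n.choose (i+1) := Nat.choose_succ_succ n i
    have h2 : m.descFactorial (i+1) = (m - i) * m.descFactorial i := Nat.descFactorial_succ m i
    have h3 : n + 1 - (i+1) = n - i := by omega
    have h4 : m - (i+1) = m - i - 1 := by omega
    rw [h1, h2, h3, h4]
    push_cast
    ring
  rw [Finset.sum_congr rfl congr1]
  simp
  ring

lemma pe_iter_eval (s : ℂ) (n m : ℕ) :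
    ∀ t, pe s ((Tp s)^[n] (X ^ m)) t =
      (∑ i ∈ Finset.range (n+1), (n.choose i : ℂ) * (m.descFactorial i : ℂ) * s^(n-i) * t^(m-i))
        * Complex.exp (s * t) := by
  induction n with
  | zero => intro t; simp [pe]
  | succ n IH =>
    intro t
    have hfun : pe s ((Tp s)^[n] (X ^ m)) = fun t =>
        (∑ i ∈ Finset.range (n+1), (n.choose i : ℂ) * (m.descFactorial i : ℂ) * s^(n-i) * t^(m-i))
          * Complex.exp (s * t) := funext IH
    have h1 : pe s ((Tp s)^[n+1] (X ^ m)) t = deriv (pe s ((Tp s)^[n] (X ^ m))) t := by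
      rw [Function.iterate_succ_apply']
      exact (pe_hasDerivAt s _ t).deriv.symm
    rw [h1, hfun]
    have hsum : HasDerivAt (fun t : ℂ => ∑ i ∈ Finset.range (n+1),
        (n.choose i : ℂ) * (m.descFactorial i : ℂ) * s^(n-i) * t^(m-i))
        (∑ i ∈ Finset.range (n+1),
          (n.choose i : ℂ) * (m.descFactorial i : ℂ) * s^(n-i) * (((m-i : ℕ) : ℂ) * t^(m-i-1))) t := by
      apply HasDerivAt.fun_sum
      intro i _
      exact (hasDerivAt_pow (m-i) t).const_mul _
    have hexp : HasDerivAt (fun t : ℂ => Complex.exp (s * t)) (s * Complex.exp (s * t)) t := by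
      simpa [mul_comm] using (((hasDerivAt_id t).const_mul s).cexp)
    have := (hsum.fun_mul hexp).deriv
    rw [this]
    rw [← key_alg s t n m]
    ring

lemma choose_descFactorial_symm (n m i : ℕ) :
    (n.choose i) * (m.descFactorial i) = (m.choose i) * (n.descFactorial i) := by
  rw [Nat.descFactorial_eq_factorial_mul_choose, Nat.descFactorial_eq_factorial_mul_choose]
  ring

/-- The key symmetry: `∂ₜⁿ (tᵐ e^{st})` equals `∂ₛᵐ (sⁿ e^{st})`. -/
lemma pe_symm (s t : ℂ) (n m : ℕ) :
    pe s ((Tp s)^[n] (X ^ m)) t = pe t ((Tp t)^[m] (X ^ n)) s := by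
  rw [pe_iter_eval, pe_iter_eval]
  rw [mul_comm t s]
  congr 1
  have hn : ∑ i ∈ Finset.range (n+1), (n.choose i : ℂ) * (m.descFactorial i : ℂ) * s^(n-i) * t^(m-i)
      = ∑ i ∈ Finset.range (n+m+2), (n.choose i : ℂ) * (m.descFactorial i : ℂ) * s^(n-i) * t^(m-i) := by
    apply Finset.sum_subset
    · intro i hi; simp only [Finset.mem_range] at *; omega
    · intro i _ hi
      simp only [Finset.mem_range, not_lt] at hi
      have : n.choose i = 0 := Nat.choose_eq_zero_of_lt (by omega)
      rw [this]; simp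
  have hm : ∑ i ∈ Finset.range (m+1), (m.choose i : ℂ) * (n.descFactorial i : ℂ) * t^(m-i) * s^(n-i)
      = ∑ i ∈ Finset.range (n+m+2), (m.choose i : ℂ) * (n.descFactorial i : ℂ) * t^(m-i) * s^(n-i) := by
    apply Finset.sum_subset
    · intro i hi; simp only [Finset.mem_range] at *; omega
    · intro i _ hi
      simp only [Finset.mem_range, not_lt] at hi
      have : m.choose i = 0 := Nat.choose_eq_zero_of_lt (by omega)
      rw [this]; simp
  rw [hn, hm]
  apply Finset.sum_congr rfl
  intro i _
  have := choose_descFactorial_symm n m i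
  have hc : (n.choose i : ℂ) * (m.descFactorial i : ℂ) = (m.choose i : ℂ) * (n.descFactorial i : ℂ) := by
    push_cast [← Nat.cast_mul]
    exact_mod_cast congrArg (Nat.cast (R := ℂ)) this
  rw [mul_assoc, mul_assoc, mul_comm (s^(n-i)) (t^(m-i)), ← mul_assoc, ← mul_assoc, hc]

/-- Quantitative bound for the iterated derivatives of `tᵐ e^{st}` on `|t| ≤ r`. -/
lemma pe_iter_bound (s : ℂ) (r : ℝ) (hr : 0 < r) (n m : ℕ) (t : ℂ) (ht : Complex.abs t ≤ r) :
    Complex.abs (pe s ((Tp s)^[n] (X ^ m)) t) ≤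
      (2 * (1 + Complex.abs s) * (1 + 1/r))^n * ((m+1 : ℝ))^n * r^m
        * Real.exp (Complex.abs s * r) := by
  have habs_s : (0:ℝ) ≤ Complex.abs s := Complex.abs.nonneg s
  have hinv : (0:ℝ) < 1/r := by positivity
  rw [pe_iter_eval, map_mul]
  have habs_exp : Complex.abs (Complex.exp (s * t)) ≤ Real.exp (Complex.abs s * r) := by
    rw [Complex.abs_exp]
    apply Real.exp_le_exp.mpr
    calc (s*t).re ≤ Complex.abs (s*t) := Complex.re_le_abs _
      _ = Complex.abs s * Complex.abs t := map_mul _ _ _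
      _ ≤ Complex.abs s * r := mul_le_mul_of_nonneg_left ht habs_s
  have hterm : ∀ i ∈ Finset.range (n+1),
      Complex.abs ((n.choose i : ℂ) * (m.descFactorial i : ℂ) * s^(n-i) * t^(m-i)) ≤
        (n.choose i : ℝ) * (((m+1:ℝ))^n * ((1 + Complex.abs s)^n * ((1+1/r)^n * r^m))) := by
    intro i hi
    have hin : i ≤ n := by simpa [Nat.lt_succ_iff] using hi
    rw [map_mul, map_mul, map_mul, map_pow, map_pow]
    simp only [Complex.abs_natCast]
    have b1 : (m.descFactorial i : ℝ) ≤ ((m+1:ℝ))^n := by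
      calc (m.descFactorial i : ℝ) ≤ ((m^i : ℕ) : ℝ) := by
            exact_mod_cast Nat.descFactorial_le_pow m i
        _ = ((m:ℝ))^i := by push_cast; ring
        _ ≤ ((m+1:ℝ))^i := pow_le_pow_left₀ (by positivity) (by linarith) i
        _ ≤ ((m+1:ℝ))^n := pow_le_pow_right₀ (by linarith) hin
    have b2 : Complex.abs s ^ (n-i) ≤ (1 + Complex.abs s)^n := by
      calc Complex.abs s ^ (n-i) ≤ (1 + Complex.abs s)^(n-i) :=
            pow_le_pow_left₀ habs_s (by linarith) _
        _ ≤ (1 + Complex.abs s)^n := pow_le_pow_right₀ (by linarith) (Nat.sub_le n i)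
    have b3 : Complex.abs t ^ (m-i) ≤ (1+1/r)^n * r^m := by
      have h0 : Complex.abs t ^ (m-i) ≤ r ^ (m-i) :=
        pow_le_pow_left₀ (Complex.abs.nonneg t) ht _
      have hd : (m - i) + (m - (m-i)) = m := by omega
      have hdn : m - (m-i) ≤ n := by omega
      have h2 : (1:ℝ) ≤ (1+1/r)^(m-(m-i)) * r^(m-(m-i)) := by
        rw [← mul_pow]
        have he : (1+1/r)*r = r+1 := by field_simp
        rw [he]
        apply one_le_pow₀ (by linarith)
      have h4 : (1+1/r)^(m-(m-i)) ≤ (1+1/r)^n := pow_le_pow_right₀ (by linarith) hdn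
      have h5 : (1:ℝ) ≤ (1+1/r)^n * r^(m-(m-i)) :=
        le_trans h2 (mul_le_mul_of_nonneg_right h4 (by positivity))
      calc Complex.abs t ^ (m-i) ≤ r^(m-i) := h0
        _ = r^(m-i) * 1 := (mul_one _).symm
        _ ≤ r^(m-i) * ((1+1/r)^n * r^(m-(m-i))) :=
            mul_le_mul_of_nonneg_left h5 (by positivity)
        _ = (1+1/r)^n * (r^(m-i) * r^(m-(m-i))) := by ring
        _ = (1+1/r)^n * r^m := by rw [← pow_add, hd]
    refine le_trans (mul_le_mul (mul_le_mul (mul_le_mul le_rfl b1 (by positivity) (by positivity))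
      b2 (pow_nonneg habs_s _) (by positivity)) b3 (pow_nonneg (Complex.abs.nonneg t) _)
      (by positivity)) (le_of_eq (by ring))
  have hsum : Complex.abs (∑ i ∈ Finset.range (n+1),
      (n.choose i : ℂ) * (m.descFactorial i : ℂ) * s^(n-i) * t^(m-i)) ≤
      (2 * (1 + Complex.abs s) * (1 + 1/r))^n * ((m+1 : ℝ))^n * r^m := by
    calc Complex.abs (∑ i ∈ Finset.range (n+1),
        (n.choose i : ℂ) * (m.descFactorial i : ℂ) * s^(n-i) * t^(m-i))
        ≤ ∑ i ∈ Finset.range (n+1),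
            Complex.abs ((n.choose i : ℂ) * (m.descFactorial i : ℂ) * s^(n-i) * t^(m-i)) := by
          exact Complex.abs.sum_le _ _
      _ ≤ ∑ i ∈ Finset.range (n+1),
            (n.choose i : ℝ) * (((m+1:ℝ))^n * ((1 + Complex.abs s)^n * ((1+1/r)^n * r^m))) :=
          Finset.sum_le_sum hterm
      _ = (∑ i ∈ Finset.range (n+1), (n.choose i : ℝ)) *
            (((m+1:ℝ))^n * ((1 + Complex.abs s)^n * ((1+1/r)^n * r^m))) := by
          rw [← Finset.sum_mul]
      _ = (2^n : ℝ) * (((m+1:ℝ))^n * ((1 + Complex.abs s)^n * ((1+1/r)^n * r^m))) := by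
          congr 1
          rw [← Nat.cast_sum]
          rw [Nat.sum_range_choose]
          push_cast; ring
      _ = (2 * (1 + Complex.abs s) * (1 + 1/r))^n * ((m+1 : ℝ))^n * r^m := by
          rw [mul_pow, mul_pow]; ring
  calc Complex.abs (∑ i ∈ Finset.range (n+1),
        (n.choose i : ℂ) * (m.descFactorial i : ℂ) * s^(n-i) * t^(m-i))
        * Complex.abs (Complex.exp (s * t))
      ≤ ((2 * (1 + Complex.abs s) * (1 + 1/r))^n * ((m+1 : ℝ))^n * r^m)
          * Real.exp (Complex.abs s * r) := by
        apply mul_le_mul hsum habs_exp (Complex.abs.nonneg _) (by positivity)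
    _ = _ := by ring
section Multi

open Polynomial Complex Function Finset

variable {k : ℕ}

/-- product of one-variable `pe` blocks -/
noncomputable def PF (a : Fin k → ℂ) (p : Fin k → Polynomial ℂ) : (Fin k → ℂ) → ℂ :=
  fun z => ∏ j, pe (a j) (p j) (z j)

noncomputable def DPF (a : Fin k → ℂ) (p : Fin k → Polynomial ℂ) (z : Fin k → ℂ) :
    (Fin k → ℂ) →L[ℂ] ℂ :=
  ∑ j, PF a (Function.update p j (Tp (a j) (p j))) z •
    (ContinuousLinearMap.proj j : (Fin k → ℂ) →L[ℂ] ℂ)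

lemma PF_update_eq (a : Fin k → ℂ) (p : Fin k → Polynomial ℂ) (i : Fin k) (Q : Polynomial ℂ)
    (z : Fin k → ℂ) :
    PF a (Function.update p i Q) z = pe (a i) Q (z i) * ∏ j ∈ Finset.univ.erase i, pe (a j) (p j) (z j) := by
  rw [PF, ← Finset.mul_prod_erase Finset.univ _ (Finset.mem_univ i)]
  rw [Function.update_self]
  congr 1
  apply Finset.prod_congr rfl
  intro j hj
  rw [Function.update_of_ne (Finset.ne_of_mem_erase hj)]

lemma PF_hasFDerivAt (a : Fin k → ℂ) (p : Fin k → Polynomial ℂ) (z : Fin k → ℂ) :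
    HasFDerivAt (PF a p) (DPF a p z) z := by
  classical
  have h : ∀ j : Fin k, HasFDerivAt (fun z : Fin k → ℂ => pe (a j) (p j) (z j))
      (pe (a j) (Tp (a j) (p j)) (z j) • (ContinuousLinearMap.proj j : (Fin k → ℂ) →L[ℂ] ℂ)) z :=
    fun j => by
      have hp : HasFDerivAt (fun z : Fin k → ℂ => z j)
          (ContinuousLinearMap.proj j : (Fin k → ℂ) →L[ℂ] ℂ) z :=
        (ContinuousLinearMap.proj j : (Fin k → ℂ) →L[ℂ] ℂ).hasFDerivAt
      exact (pe_hasDerivAt (a j) (p j) (z j)).comp_hasFDerivAt z hp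
  have H := HasFDerivAt.finset_prod (u := Finset.univ) (fun j _ => h j)
  have : PF a p = (fun z : Fin k → ℂ => ∏ j, pe (a j) (p j) (z j)) := rfl
  rw [this]
  refine H.congr_fderiv ?_
  symm
  rw [DPF]
  apply Finset.sum_congr rfl
  intro i _
  rw [PF_update_eq, smul_smul, mul_comm]

lemma PF_differentiable (a : Fin k → ℂ) (p : Fin k → Polynomial ℂ) :
    Differentiable ℂ (PF a p) := fun z => (PF_hasFDerivAt a p z).differentiableAt

lemma DPF_apply_single (a : Fin k → ℂ) (p : Fin k → Polynomial ℂ) (z : Fin k → ℂ) (j : Fin k) :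
    DPF a p z (Pi.single j 1) = PF a (Function.update p j (Tp (a j) (p j))) z := by
  rw [DPF, ContinuousLinearMap.sum_apply]
  rw [Finset.sum_eq_single j]
  · simp
  · intro i _ hij
    simp [Pi.single_eq_of_ne hij]
  · intro hj; exact absurd (Finset.mem_univ j) hj

lemma pderivC_PF (a : Fin k → ℂ) (p : Fin k → Polynomial ℂ) (j : Fin k) :
    pderivC j (PF a p) = PF a (Function.update p j (Tp (a j) (p j))) := by
  funext z
  rw [pderivC, (PF_hasFDerivAt a p z).fderiv, DPF_apply_single]

lemma pderivC_iter_PF (a : Fin k → ℂ) (p : Fin k → Polynomial ℂ) (j : Fin k) (n : ℕ) :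
    (pderivC j)^[n] (PF a p) = PF a (Function.update p j ((Tp (a j))^[n] (p j))) := by
  induction n generalizing p with
  | zero => simp
  | succ n IH =>
    rw [Function.iterate_succ_apply, pderivC_PF, IH]
    congr 1
    rw [Function.update_idem, Function.update_self, Function.iterate_succ_apply]

/-- `mderivC`-analogue on `PF`, through the `foldr` structure -/
lemma foldr_PF (a : Fin k → ℂ) (β : Fin k → ℕ) (L : List (Fin k)) (hL : L.Nodup)
    (p : Fin k → Polynomial ℂ) :
    L.foldr (fun j g => (pderivC j)^[β j] g) (PF a p) =
      PF a (fun i => if i ∈ L then (Tp (a i))^[β i] (p i) else p i) := by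
  induction L generalizing p with
  | nil => simp
  | cons j L IH =>
    have hnd := (List.nodup_cons.mp hL)
    rw [List.foldr_cons, IH hnd.2, pderivC_iter_PF]
    have hjL : (if j ∈ L then (Tp (a j))^[β j] (p j) else p j) = p j := by
      simp [hnd.1]
    rw [hjL]
    have hupd : Function.update (fun i => if i ∈ L then (Tp (a i))^[β i] (p i) else p i) j
        ((Tp (a j))^[β j] (p j)) = fun i => if i ∈ j :: L then (Tp (a i))^[β i] (p i) else p i := by
      funext i
      by_cases hij : i = j
      · subst hij; simp
      · rw [Function.update_of_ne hij]
        simp [List.mem_cons, hij]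
    rw [hupd]

end Multi
section Words

open Polynomial Complex Function Finset

variable {k : ℕ}

noncomputable def applyWord (L : List (Fin k)) (f : (Fin k → ℂ) → ℂ) : (Fin k → ℂ) → ℂ :=
  L.foldr (fun j g => pderivC j g) f

lemma applyWord_cons (j : Fin k) (L : List (Fin k)) (f : (Fin k → ℂ) → ℂ) :
    applyWord (j :: L) f = pderivC j (applyWord L f) := rfl

lemma applyWord_append (L₁ L₂ : List (Fin k)) (f : (Fin k → ℂ) → ℂ) :
    applyWord (L₁ ++ L₂) f = applyWord L₁ (applyWord L₂ f) := List.foldr_append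

lemma iterate_pderivC_eq (j : Fin k) (n : ℕ) (f : (Fin k → ℂ) → ℂ) :
    (pderivC j)^[n] f = applyWord (List.replicate n j) f := by
  induction n with
  | zero => rfl
  | succ n IH => rw [Function.iterate_succ_apply', List.replicate_succ, applyWord_cons, IH]

noncomputable def wordOf (β : Fin k → ℕ) : List (Fin k) :=
  (List.finRange k).flatMap fun j => List.replicate (β j) j

lemma mderivC_eq_applyWord (β : Fin k → ℕ) (f : (Fin k → ℂ) → ℂ) :
    mderivC β f = applyWord (wordOf β) f := by
  rw [mderivC, wordOf]
  generalize (List.finRange k) = L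
  induction L with
  | nil => rfl
  | cons j L IH =>
    rw [List.foldr_cons, IH, List.flatMap_cons, applyWord_append, iterate_pderivC_eq]

lemma count_wordOf (β : Fin k → ℕ) (i : Fin k) : (wordOf β).count i = β i := by
  rw [wordOf]
  have aux : ∀ L : List (Fin k), L.Nodup →
      ((L.flatMap fun j => List.replicate (β j) j).count i = if i ∈ L then β i else 0) := by
    intro L
    induction L with
    | nil => simp
    | cons j L IH =>
      intro hnd
      have hnd' := List.nodup_cons.mp hnd
      rw [List.flatMap_cons, List.count_append, IH hnd'.2, List.count_replicate]
      by_cases hij : i = j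
      · subst hij; simp [hnd'.1]
      · have hji : (j == i) = false := by
          rw [beq_eq_false_iff_ne]; exact fun h => hij h.symm
        simp [List.mem_cons, hij, hji]
  rw [aux (List.finRange k) (List.nodup_finRange k)]
  simp [List.mem_finRange]

lemma update_count (a : Fin k → ℂ) (p : Fin k → Polynomial ℂ) (j : Fin k) (L : List (Fin k)) :
    Function.update (fun i => (Tp (a i))^[List.count i L] (p i)) j
        (Tp (a j) ((Tp (a j))^[List.count j L] (p j)))
      = fun i => (Tp (a i))^[List.count i (j :: L)] (p i) := by
  funext i
  by_cases hij : i = j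
  · subst hij
    rw [Function.update_self, List.count_cons_self]
    exact (Function.iterate_succ_apply' _ _ _).symm
  · rw [Function.update_of_ne hij, List.count_cons_of_ne (Ne.symm hij)]

lemma applyWord_PF (a : Fin k → ℂ) (p : Fin k → Polynomial ℂ) (L : List (Fin k)) :
    applyWord L (PF a p) = PF a (fun i => (Tp (a i))^[List.count i L] (p i)) := by
  induction L with
  | nil => simp [applyWord]
  | cons j L IH => rw [applyWord_cons, IH, pderivC_PF, update_count]

lemma pderivC_sum_PF {ι : Type} (s : Finset ι) (t : ι → ℂ) (P : ι → Fin k → Polynomial ℂ)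
    (a : Fin k → ℂ) (j : Fin k) :
    pderivC j (fun z => ∑ α ∈ s, t α * PF a (P α) z) =
      fun z => ∑ α ∈ s, t α * pderivC j (PF a (P α)) z := by
  funext z
  rw [pderivC]
  rw [fderiv_fun_sum (fun α _ => ((PF_differentiable a (P α)) z).const_mul (t α))]
  rw [ContinuousLinearMap.sum_apply]
  apply Finset.sum_congr rfl
  intro α _
  rw [fderiv_const_mul ((PF_differentiable a (P α)) z) (t α)]
  rw [ContinuousLinearMap.smul_apply, smul_eq_mul, pderivC]

lemma applyWord_sum_PF {ι : Type} (s : Finset ι) (t : ι → ℂ) (P : ι → Fin k → Polynomial ℂ)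
    (a : Fin k → ℂ) (L : List (Fin k)) :
    applyWord L (fun z => ∑ α ∈ s, t α * PF a (P α) z) =
      fun z => ∑ α ∈ s, t α * PF a (fun i => (Tp (a i))^[List.count i L] (P α i)) z := by
  induction L with
  | nil => simp [applyWord]
  | cons j L IH =>
    rw [applyWord_cons, IH, pderivC_sum_PF]
    funext z
    apply Finset.sum_congr rfl
    intro α _
    rw [pderivC_PF, update_count]

lemma mderivC_sum_PF {ι : Type} (s : Finset ι) (t : ι → ℂ) (P : ι → Fin k → Polynomial ℂ)
    (a : Fin k → ℂ) (β : Fin k → ℕ) :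
    mderivC β (fun z => ∑ α ∈ s, t α * PF a (P α) z) =
      fun z => ∑ α ∈ s, t α * PF a (fun i => (Tp (a i))^[β i] (P α i)) z := by
  rw [mderivC_eq_applyWord, applyWord_sum_PF]
  funext z
  apply Finset.sum_congr rfl
  intro α _
  have hc : (fun i => (Tp (a i))^[List.count i (wordOf β)] (P α i))
      = fun i => (Tp (a i))^[β i] (P α i) := by
    funext i; rw [count_wordOf]
  rw [hc]

lemma pderivC_cPF (c : ℂ) (a : Fin k → ℂ) (p : Fin k → Polynomial ℂ) (j : Fin k) :
    pderivC j (fun z => c * PF a p z) =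
      fun z => c * PF a (Function.update p j (Tp (a j) (p j))) z := by
  funext z
  rw [pderivC, fderiv_const_mul ((PF_differentiable a p) z) c, ContinuousLinearMap.smul_apply,
    smul_eq_mul, ← pderivC_PF, pderivC]

lemma applyWord_cPF (c : ℂ) (a : Fin k → ℂ) (p : Fin k → Polynomial ℂ) (L : List (Fin k)) :
    applyWord L (fun z => c * PF a p z) =
      fun z => c * PF a (fun i => (Tp (a i))^[List.count i L] (p i)) z := by
  induction L with
  | nil => simp [applyWord]
  | cons j L IH =>
    rw [applyWord_cons, IH, pderivC_cPF]
    funext z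
    rw [update_count]

end Words
section Summability

lemma summable_pi_prod : ∀ {k : ℕ} (w : Fin k → ℕ → ℝ), (∀ j, Summable fun m => |w j m|) →
    Summable (fun β : Fin k → ℕ => ∏ j, w j (β j)) := by
  intro k
  induction k with
  | zero =>
    intro w _
    have : (fun β : Fin 0 → ℕ => ∏ j, w j (β j)) = fun _ => 1 := by
      funext β; simp
    rw [this]
    exact Summable.of_finite
  | succ k IH =>
    intro w hw
    have h1 : Summable fun z : ℕ × (Fin k → ℕ) => w 0 z.1 * ∏ j, w j.succ (z.2 j) := by
      apply summable_mul_of_summable_norm (f := fun m => w 0 m)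
        (g := fun γ : Fin k → ℕ => ∏ j, w j.succ (γ j))
      · simpa [Real.norm_eq_abs] using hw 0
      · have h2 := IH (fun j m => |w j.succ m|) (fun j => by simpa [abs_abs] using hw j.succ)
        have habs : (fun γ : Fin k → ℕ => ‖∏ j, w j.succ (γ j)‖)
            = fun γ => ∏ j, |w j.succ (γ j)| := by
          funext γ
          rw [Real.norm_eq_abs, Finset.abs_prod]
        rw [habs]
        exact h2
    have hg : Function.Injective
        (fun β : Fin (k+1) → ℕ => ((β 0, fun i => β i.succ) : ℕ × (Fin k → ℕ))) := by
      intro β β' hbb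
      funext i
      refine Fin.cases ?_ (fun i => ?_) i
      · exact congrArg Prod.fst hbb
      · exact congrFun (congrArg Prod.snd hbb) i
    have h3 := h1.comp_injective hg
    refine h3.congr fun β => ?_
    show w 0 (β 0) * ∏ j : Fin k, w j.succ (β j.succ) = ∏ j, w j (β j)
    rw [Fin.prod_univ_succ]

lemma summable_poly_geom (N : ℕ) (ρ : ℝ) (h0 : 0 ≤ ρ) (h1 : ρ < 1) :
    Summable fun m : ℕ => ((m:ℝ)+1)^N * ρ^m := by
  have hfe : (fun m : ℕ => ((m:ℝ)+1)^N * ρ^m)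
      = fun m : ℕ => ∑ i ∈ Finset.range (N+1), ((m:ℝ)^i * (1:ℝ)^(N-i) * (N.choose i : ℝ)) * ρ^m := by
    funext m
    rw [add_pow, Finset.sum_mul]
  rw [hfe]
  apply summable_sum
  intro i _
  have hb := summable_pow_mul_geometric_of_norm_lt_one i
    (r := ρ) (by rwa [Real.norm_eq_abs, _root_.abs_of_nonneg h0])
  have := hb.mul_left ((N.choose i : ℝ))
  refine this.congr fun m => by ring

lemma summable_master {k : ℕ} (n : Fin k → ℕ) (ρ : ℝ) (h0 : 0 ≤ ρ) (h1 : ρ < 1) :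
    Summable (fun β : Fin k → ℕ => ∏ j, (((β j : ℝ)+1)^(n j) * ρ^(β j))) := by
  apply summable_pi_prod (w := fun j m => ((m:ℝ)+1)^(n j) * ρ^m)
  intro j
  refine (summable_poly_geom (n j) ρ h0 h1).congr fun m => ?_
  exact (_root_.abs_of_nonneg (by positivity)).symm

end Summability
/-- If `F` is a convergent power series (with coefficients `c`) on a domain
`Ω ∋ 0` and `G` is a polynomial (with finitely supported coefficients `g`), then
`F(∂/∂h)[G(h) e^{⟨q,h⟩}] = G(∂/∂q)[F(q) e^{⟨q,h⟩}]` for `q ∈ Ω`, `h ∈ ℂᵏ`. -/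
theorem todd_operator_switch (k : ℕ) (Ω : Set (Fin k → ℂ)) (hΩ : IsOpen Ω)
    (h0 : (0 : Fin k → ℂ) ∈ Ω)
    (c : (Fin k → ℕ) → ℂ) (F : (Fin k → ℂ) → ℂ)
    (hF : ∀ q ∈ Ω, HasSum (fun β => c β * ∏ j, q j ^ β j) (F q))
    (g : (Fin k → ℕ) →₀ ℂ)
    (G : (Fin k → ℂ) → ℂ)
    (hG : ∀ h, G h = ∑ β ∈ g.support, g β * ∏ j, h j ^ β j)
    (q : Fin k → ℂ) (hq : q ∈ Ω) (h : Fin k → ℂ)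
    (hsum : Summable fun β =>
      c β * mderivC β (fun h' => G h' * Complex.exp (∑ j, q j * h' j)) h) :
    (∑' β : Fin k → ℕ,
        c β * mderivC β (fun h' => G h' * Complex.exp (∑ j, q j * h' j)) h) =
      ∑ β ∈ g.support,
        g β * mderivC β (fun q' => F q' * Complex.exp (∑ j, q' j * h j)) q := by
  classical
  set FE : (Fin k → ℂ) → ℂ := fun q' => F q' * Complex.exp (∑ j, q' j * h j) with hFE
  -- ### geometric setup
  obtain ⟨ε, hε, hball⟩ := Metric.isOpen_iff.mp hΩ q hq
  set δ : ℝ := ε / 2 with hδdef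
  have hδ : 0 < δ := by positivity
  have hball2 : Metric.ball q (2*δ) ⊆ Ω := by
    have h2δ : 2*δ = ε := by rw [hδdef]; ring
    rwa [h2δ]
  set u : Fin k → ℂ := fun j => if q j = 0 then 1 else q j / ((Complex.abs (q j) : ℝ) : ℂ) with hu
  have huabs : ∀ j, Complex.abs (u j) = 1 := by
    intro j
    rw [hu]
    by_cases hqj : q j = 0
    · simp [hqj]
    · simp only [if_neg hqj]
      rw [map_div₀, Complex.abs_ofReal, _root_.abs_of_nonneg (Complex.abs.nonneg _)]
      exact div_self (Complex.abs.ne_zero hqj)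
  have huq : ∀ j, u j * ((Complex.abs (q j) : ℝ) : ℂ) = q j := by
    intro j
    rw [hu]
    by_cases hqj : q j = 0
    · simp [hqj]
    · simp only [if_neg hqj]
      rw [div_mul_cancel₀]
      exact Complex.ofReal_ne_zero.mpr (Complex.abs.ne_zero hqj)
  set q'' : Fin k → ℂ := fun j => u j * ((Complex.abs (q j) + δ : ℝ) : ℂ) with hq''def
  have habs'' : ∀ j, Complex.abs (q'' j) = Complex.abs (q j) + δ := by
    intro j
    rw [hq''def, map_mul, huabs, one_mul, Complex.abs_ofReal]
    exact _root_.abs_of_nonneg (by positivity)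
  have hq''Ω : q'' ∈ Ω := by
    apply hball2
    rw [Metric.mem_ball]
    rw [dist_pi_lt_iff (by positivity)]
    intro j
    have hdiff : q'' j - q j = u j * (δ : ℂ) := by
      rw [hq''def]
      push_cast
      rw [mul_add, huq j]
      ring
    rw [Complex.dist_eq_abs, hdiff, map_mul, huabs, one_mul, Complex.abs_ofReal,
      _root_.abs_of_nonneg (le_of_lt hδ)]
    linarith
  -- ### the bound M on the series coefficients
  obtain ⟨M, hM1, hM⟩ : ∃ M : ℝ, 1 ≤ M ∧
      ∀ β, Complex.abs (c β) * ∏ j, (Complex.abs (q j) + δ)^(β j) ≤ M := by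
    have hsum'' := (hF q'' hq''Ω).summable
    have htend := hsum''.tendsto_cofinite_zero
    have hev : ∀ᶠ β in Filter.cofinite, Complex.abs (c β * ∏ j, q'' j ^ β j) ≤ 1 := by
      have hnb := htend.eventually (Metric.ball_mem_nhds (0:ℂ) one_pos)
      filter_upwards [hnb] with β hβ
      rw [Complex.dist_eq_abs, sub_zero] at hβ
      exact le_of_lt hβ
    have hfin : {β : Fin k → ℕ | ¬ Complex.abs (c β * ∏ j, q'' j ^ β j) ≤ 1}.Finite :=
      Filter.eventually_cofinite.mp hev
    refine ⟨1 + ∑ β ∈ hfin.toFinset, Complex.abs (c β * ∏ j, q'' j ^ β j), ?_, ?_⟩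
    · have : (0:ℝ) ≤ ∑ β ∈ hfin.toFinset, Complex.abs (c β * ∏ j, q'' j ^ β j) :=
        Finset.sum_nonneg fun _ _ => Complex.abs.nonneg _
      linarith
    · intro β
      have heq : Complex.abs (c β) * ∏ j, (Complex.abs (q j) + δ)^(β j)
          = Complex.abs (c β * ∏ j, q'' j ^ β j) := by
        rw [map_mul, map_prod]
        congr 1
        apply Finset.prod_congr rfl
        intro j _
        rw [map_pow, habs'']
      rw [heq]
      by_cases hβ : Complex.abs (c β * ∏ j, q'' j ^ β j) ≤ 1
      · have : (0:ℝ) ≤ ∑ β ∈ hfin.toFinset, Complex.abs (c β * ∏ j, q'' j ^ β j) :=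
          Finset.sum_nonneg fun _ _ => Complex.abs.nonneg _
        linarith
      · have hmem : β ∈ hfin.toFinset := by
          rw [Set.Finite.mem_toFinset]; exact hβ
        have hle := Finset.single_le_sum
          (f := fun β => Complex.abs (c β * ∏ j, q'' j ^ β j))
          (fun _ _ => Complex.abs.nonneg _) hmem
        linarith
  -- ### radii and ratio
  set r : Fin k → ℝ := fun j => Complex.abs (q j) + δ/2 with hrdef
  have hrpos : ∀ j, 0 < r j := fun j => by
    rw [hrdef]; have := Complex.abs.nonneg (q j); positivity
  set ρ : ℝ := (‖q‖ + δ/2)/(‖q‖ + δ) with hρdef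
  have hQ0 : (0:ℝ) ≤ ‖q‖ := norm_nonneg q
  have hρ0 : 0 ≤ ρ := by rw [hρdef]; positivity
  have hρ1 : ρ < 1 := by
    rw [hρdef, div_lt_one (by positivity)]
    linarith
  have hratio : ∀ j, r j ≤ ρ * (Complex.abs (q j) + δ) := by
    intro j
    have hx : Complex.abs (q j) ≤ ‖q‖ := by
      have := norm_le_pi_norm q j
      exact this
    rw [hρdef, hrdef, div_mul_eq_mul_div, le_div_iff₀ (by positivity)]
    nlinarith [Complex.abs.nonneg (q j)]
  have hcb : ∀ β : Fin k → ℕ, Complex.abs (c β) * ∏ j, (r j)^(β j) ≤ M * ∏ j, ρ^(β j) := by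
    intro β
    have h1 : ∏ j, (r j)^(β j) ≤ ∏ j, (ρ * (Complex.abs (q j) + δ))^(β j) :=
      Finset.prod_le_prod (fun j _ => pow_nonneg (le_of_lt (hrpos j)) _)
        (fun j _ => pow_le_pow_left₀ (le_of_lt (hrpos j)) (hratio j) _)
    have h2 : ∏ j, (ρ * (Complex.abs (q j) + δ))^(β j)
        = (∏ j, ρ^(β j)) * ∏ j, (Complex.abs (q j) + δ)^(β j) := by
      rw [← Finset.prod_mul_distrib]
      exact Finset.prod_congr rfl fun j _ => mul_pow _ _ _
    calc Complex.abs (c β) * ∏ j, (r j)^(β j)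
        ≤ Complex.abs (c β) * ((∏ j, ρ^(β j)) * ∏ j, (Complex.abs (q j) + δ)^(β j)) := by
          rw [← h2]
          exact mul_le_mul_of_nonneg_left h1 (Complex.abs.nonneg _)
      _ = (Complex.abs (c β) * ∏ j, (Complex.abs (q j) + δ)^(β j)) * ∏ j, ρ^(β j) := by ring
      _ ≤ M * ∏ j, ρ^(β j) := by
          apply mul_le_mul_of_nonneg_right (hM β)
          exact Finset.prod_nonneg fun j _ => pow_nonneg hρ0 _
  -- ### the polydisc W
  set W : Set (Fin k → ℂ) := {z | ∀ j, Complex.abs (z j) < r j} ∩ Metric.ball q (2*δ) with hWdef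
  have hWopen : IsOpen W := by
    apply IsOpen.inter _ Metric.isOpen_ball
    have hset : {z : Fin k → ℂ | ∀ j, Complex.abs (z j) < r j}
        = ⋂ j, {z : Fin k → ℂ | Complex.abs (z j) < r j} := by
      ext z; simp [Set.mem_iInter]
    rw [hset]
    apply isOpen_iInter_of_finite
    intro j
    exact isOpen_lt (Complex.continuous_abs.comp (continuous_apply j)) continuous_const
  have hWconv : Convex ℝ W := by
    apply Convex.inter _ (convex_ball q (2*δ))
    have hset : {z : Fin k → ℂ | ∀ j, Complex.abs (z j) < r j}
        = ⋂ j, (⇑((LinearMap.proj j : (Fin k → ℂ) →ₗ[ℂ] ℂ).restrictScalars ℝ)) ⁻¹'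
            (Metric.ball (0:ℂ) (r j)) := by
      ext z
      simp only [Set.mem_iInter, Set.mem_setOf_eq, Set.mem_preimage, Metric.mem_ball,
        Complex.dist_eq_abs, sub_zero, LinearMap.coe_restrictScalars, LinearMap.proj_apply]
    rw [hset]
    exact convex_iInter fun j => (convex_ball (0:ℂ) (r j)).linear_preimage _
  have hWq : q ∈ W := by
    constructor
    · intro j
      rw [hrdef]
      simp only [Set.mem_setOf_eq]
      linarith
    · exact Metric.mem_ball_self (by positivity)
  have hWΩ : W ⊆ Ω := fun z hz => hball2 hz.2
  have hWr : ∀ z ∈ W, ∀ j, Complex.abs (z j) ≤ r j := fun z hz j => le_of_lt (hz.1 j)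
  -- ### bound constants
  set K : Fin k → ℝ := fun j => 2 * (1 + Complex.abs (h j)) * (1 + 1/(r j)) with hKdef
  set EB : Fin k → ℝ := fun j => Real.exp (Complex.abs (h j) * r j) with hEBdef
  have hKpos : ∀ j, 0 < K j := fun j => by
    rw [hKdef]
    have h1 := Complex.abs.nonneg (h j)
    have h2 := hrpos j
    have h3 : (0:ℝ) < 1/(r j) := by positivity
    positivity
  have hEBpos : ∀ j, 0 < EB j := fun j => Real.exp_pos _
  set uu : (Fin k → ℕ) → (Fin k → ℕ) → ℝ :=
    fun n β => M * (∏ j, ((K j)^(n j) * EB j)) * ∏ j, (((β j : ℝ)+1)^(n j) * ρ^(β j)) with huu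
  have huusum : ∀ n, Summable (uu n) :=
    fun n => (summable_master n ρ hρ0 hρ1).mul_left _
  have huupos : ∀ n β, 0 ≤ uu n β := by
    intro n β
    rw [huu]
    have h1 : (0:ℝ) ≤ ∏ j, ((K j)^(n j) * EB j) :=
      Finset.prod_nonneg fun j _ =>
        mul_nonneg (pow_nonneg (le_of_lt (hKpos j)) _) (le_of_lt (hEBpos j))
    have h2 : (0:ℝ) ≤ ∏ j, (((β j : ℝ)+1)^(n j) * ρ^(β j)) :=
      Finset.prod_nonneg fun j _ =>
        mul_nonneg (by positivity) (pow_nonneg hρ0 _)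
    have := hM1
    positivity
  -- ### the master pointwise bound
  have HB : ∀ (n β : Fin k → ℕ), ∀ z ∈ W,
      Complex.abs (c β * PF h (fun i => (Tp (h i))^[n i] (Polynomial.X ^ (β i))) z)
        ≤ uu n β := by
    intro n β z hz
    rw [map_mul]
    have hPF : Complex.abs (PF h (fun i => (Tp (h i))^[n i] (Polynomial.X ^ (β i))) z)
        ≤ ∏ j, ((K j)^(n j) * (((β j : ℝ)+1))^(n j) * (r j)^(β j) * EB j) := by
      rw [PF, map_prod]
      apply Finset.prod_le_prod (fun j _ => Complex.abs.nonneg _)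
      intro j _
      have hb := pe_iter_bound (h j) (r j) (hrpos j) (n j) (β j) (z j) (hWr z hz j)
      simp only [hKdef, hEBdef]
      exact_mod_cast hb
    have hsplit : ∏ j, ((K j)^(n j) * (((β j : ℝ)+1))^(n j) * (r j)^(β j) * EB j)
        = (∏ j, (r j)^(β j)) * ∏ j, ((K j)^(n j) * EB j * (((β j : ℝ)+1))^(n j)) := by
      rw [← Finset.prod_mul_distrib]
      exact Finset.prod_congr rfl fun j _ => by ring
    have step1 : Complex.abs (c β) *
        Complex.abs (PF h (fun i => (Tp (h i))^[n i] (Polynomial.X ^ (β i))) z)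
        ≤ (Complex.abs (c β) * ∏ j, (r j)^(β j)) *
            ∏ j, ((K j)^(n j) * EB j * (((β j : ℝ)+1))^(n j)) := by
      calc Complex.abs (c β) * Complex.abs (PF h (fun i => (Tp (h i))^[n i] (Polynomial.X ^ (β i))) z)
          ≤ Complex.abs (c β) * ((∏ j, (r j)^(β j)) *
              ∏ j, ((K j)^(n j) * EB j * (((β j : ℝ)+1))^(n j))) := by
            rw [← hsplit]
            exact mul_le_mul_of_nonneg_left hPF (Complex.abs.nonneg _)
        _ = _ := by ring
    have hprodpos : (0:ℝ) ≤ ∏ j, ((K j)^(n j) * EB j * (((β j : ℝ)+1))^(n j)) :=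
      Finset.prod_nonneg fun j _ => by
        have := hKpos j; have := hEBpos j; positivity
    calc Complex.abs (c β) * Complex.abs (PF h (fun i => (Tp (h i))^[n i] (Polynomial.X ^ (β i))) z)
        ≤ (Complex.abs (c β) * ∏ j, (r j)^(β j)) *
            ∏ j, ((K j)^(n j) * EB j * (((β j : ℝ)+1))^(n j)) := step1
      _ ≤ (M * ∏ j, ρ^(β j)) * ∏ j, ((K j)^(n j) * EB j * (((β j : ℝ)+1))^(n j)) :=
          mul_le_mul_of_nonneg_right (hcb β) hprodpos
      _ = uu n β := by
          simp only [huu]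
          have e1 : ∏ j, ((K j)^(n j) * EB j * (((β j : ℝ)+1))^(n j))
              = (∏ j, ((K j)^(n j) * EB j)) * ∏ j, (((β j : ℝ)+1))^(n j) := by
            rw [← Finset.prod_mul_distrib]
          have e2 : ∏ j, ((((β j : ℝ))+1)^(n j) * ρ^(β j))
              = (∏ j, (((β j : ℝ))+1)^(n j)) * ∏ j, ρ^(β j) := by
            rw [← Finset.prod_mul_distrib]
          rw [e1, e2]
          ring
  -- ### norm of projection
  have hproj : ∀ i : Fin k, ‖(ContinuousLinearMap.proj i : (Fin k → ℂ) →L[ℂ] ℂ)‖ ≤ 1 := by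
    intro i
    apply ContinuousLinearMap.opNorm_le_bound _ zero_le_one
    intro x
    rw [one_mul]
    exact norm_le_pi_norm x i
  have hns : ∀ (a : ℂ) (T : (Fin k → ℂ) →L[ℂ] ℂ), ‖a • T‖ = ‖a‖ * ‖T‖ :=
    fun a T => norm_smul a T
  -- ### bound for the derivative family
  have hDb : ∀ (n β : Fin k → ℕ), ∀ y ∈ W,
      ‖c β • DPF h (fun i => (Tp (h i))^[n i] (Polynomial.X ^ (β i))) y‖
        ≤ ∑ i, uu (Function.update n i (n i + 1)) β := by
    intro n β y hy
    rw [hns]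
    have hDPF : ‖DPF h (fun i => (Tp (h i))^[n i] (Polynomial.X ^ (β i))) y‖
        ≤ ∑ i, Complex.abs (PF h (Function.update (fun i' => (Tp (h i'))^[n i'] (Polynomial.X ^ (β i'))) i
            (Tp (h i) ((Tp (h i))^[n i] (Polynomial.X ^ (β i))))) y) := by
      rw [DPF]
      refine le_trans (norm_sum_le _ _) (Finset.sum_le_sum fun i _ => ?_)
      rw [hns]
      calc ‖PF h _ y‖ * ‖(ContinuousLinearMap.proj i : (Fin k → ℂ) →L[ℂ] ℂ)‖
          ≤ ‖PF h _ y‖ * 1 := mul_le_mul_of_nonneg_left (hproj i) (norm_nonneg _)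
        _ = _ := by rw [mul_one]; rfl
    calc ‖c β‖ * ‖DPF h (fun i => (Tp (h i))^[n i] (Polynomial.X ^ (β i))) y‖
        ≤ ‖c β‖ * ∑ i, Complex.abs (PF h (Function.update (fun i' => (Tp (h i'))^[n i'] (Polynomial.X ^ (β i'))) i
            (Tp (h i) ((Tp (h i))^[n i] (Polynomial.X ^ (β i))))) y) :=
          mul_le_mul_of_nonneg_left hDPF (norm_nonneg _)
      _ = ∑ i, Complex.abs (c β) * Complex.abs (PF h (Function.update (fun i' => (Tp (h i'))^[n i'] (Polynomial.X ^ (β i'))) i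
            (Tp (h i) ((Tp (h i))^[n i] (Polynomial.X ^ (β i))))) y) := by
          rw [Finset.mul_sum]
          rfl
      _ ≤ ∑ i, uu (Function.update n i (n i + 1)) β := by
          apply Finset.sum_le_sum
          intro i _
          have hupd : Function.update (fun i' => (Tp (h i'))^[n i'] (Polynomial.X ^ (β i'))) i
              (Tp (h i) ((Tp (h i))^[n i] (Polynomial.X ^ (β i))))
              = fun i' => (Tp (h i'))^[Function.update n i (n i + 1) i'] (Polynomial.X ^ (β i')) := by
            funext i'
            by_cases hii : i' = i
            · subst hii
              rw [Function.update_self, Function.update_self]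
              exact (Function.iterate_succ_apply' _ _ _).symm
            · rw [Function.update_of_ne hii, Function.update_of_ne hii]
          rw [← map_mul]
          rw [hupd]
          exact HB (Function.update n i (n i + 1)) β y hy
  -- ### term-by-term differentiation
  have TT : ∀ L : List (Fin k), ∀ z ∈ W,
      HasSum (fun β : Fin k → ℕ =>
          c β * PF h (fun i => (Tp (h i))^[List.count i L] (Polynomial.X ^ (β i))) z)
        (applyWord L FE z) := by
    intro L
    induction L with
    | nil =>
      intro z hz
      have hzΩ : z ∈ Ω := hWΩ hz
      have hs0 := (hF z hzΩ).mul_right (Complex.exp (∑ j, z j * h j))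
      have hfun : (fun β : Fin k → ℕ =>
          c β * PF h (fun i => (Tp (h i))^[List.count i ([] : List (Fin k))] (Polynomial.X ^ (β i))) z)
          = fun β => (c β * ∏ j, z j ^ β j) * Complex.exp (∑ j, z j * h j) := by
        funext β
        have hPF : PF h (fun i => (Tp (h i))^[List.count i ([] : List (Fin k))] (Polynomial.X ^ (β i))) z
            = (∏ j, z j ^ β j) * Complex.exp (∑ j, z j * h j) := by
          rw [PF]
          have hpe : ∀ j : Fin k, j ∈ Finset.univ →
              pe (h j) ((Tp (h j))^[List.count j ([] : List (Fin k))] (Polynomial.X ^ (β j))) (z j)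
              = z j ^ β j * Complex.exp (z j * h j) := by
            intro j _
            simp [pe, List.count_nil, mul_comm]
          rw [Finset.prod_congr rfl hpe, Finset.prod_mul_distrib, ← Complex.exp_sum]
        rw [hPF]
        ring
      rw [hfun]
      exact hs0
    | cons j L IH =>
      intro z hz
      set n : Fin k → ℕ := fun i => List.count i L with hn
      set P : (Fin k → ℕ) → (Fin k → Polynomial ℂ) :=
        fun β i => (Tp (h i))^[n i] (Polynomial.X ^ (β i)) with hP
      have hf0 : Summable (fun β => c β * PF h (P β) q) := by
        apply Summable.of_norm_bounded (huusum n)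
        intro β
        rw [Complex.norm_eq_abs]
        exact HB n β q hWq
      have key := hasFDerivAt_tsum_of_isPreconnected
        (u := fun β => ∑ i, uu (Function.update n i (n i + 1)) β)
        (f := fun β z' => c β * PF h (P β) z')
        (f' := fun β y => c β • DPF h (P β) y)
        (summable_sum fun i _ => huusum _) hWopen hWconv.isPreconnected
        (fun β y _ => (PF_hasFDerivAt h (P β) y).const_mul (c β))
        (fun β y hy => hDb n β y hy)
        hWq hf0 hz
      -- identify the tsum function with applyWord L FE on W
      have htsum_eq : ∀ y ∈ W, (∑' β, c β * PF h (P β) y) = applyWord L FE y :=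
        fun y hy => (IH y hy).tsum_eq
      have hfder_eq : fderiv ℂ (applyWord L FE) z
          = fderiv ℂ (fun y => ∑' β, c β * PF h (P β) y) z := by
        apply Filter.EventuallyEq.fderiv_eq
        filter_upwards [hWopen.mem_nhds hz] with y hy
        exact (htsum_eq y hy).symm
      have hval : applyWord (j :: L) FE z
          = (∑' β, c β • DPF h (P β) z) (Pi.single j 1) := by
        rw [applyWord_cons, pderivC, hfder_eq, key.fderiv]
      -- summability of the CLM-valued family
      have hsumCLM : Summable (fun β => c β • DPF h (P β) z) :=
        Summable.of_norm_bounded (summable_sum fun i _ => huusum _)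
          (fun β => hDb n β z hz)
      have happly := hsumCLM.hasSum.mapL (ContinuousLinearMap.apply ℂ ℂ (Pi.single j 1))
      rw [hval]
      have hfun : (fun β : Fin k → ℕ =>
          c β * PF h (fun i => (Tp (h i))^[List.count i (j :: L)] (Polynomial.X ^ (β i))) z)
          = fun β => (ContinuousLinearMap.apply ℂ ℂ (Pi.single j 1)) (c β • DPF h (P β) z) := by
        funext β
        rw [ContinuousLinearMap.apply_apply, ContinuousLinearMap.smul_apply, DPF_apply_single,
          smul_eq_mul]
        congr 1
        have hupd := update_count h (fun i => Polynomial.X ^ (β i)) j L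
        -- update_count : update (fun i => T^[count i L] (X^βi)) j (Tp (h j) (T^[count j L] (X^βj)))
        --   = fun i => T^[count i (j::L)] (X^βi)
        rw [← hupd]
      rw [hfun]
      exact happly
  -- ### the series for each iterated derivative of FE
  have HSa : ∀ α ∈ g.support, HasSum
      (fun β : Fin k → ℕ => c β * PF h (fun i => (Tp (h i))^[α i] (Polynomial.X ^ (β i))) q)
      (mderivC α FE q) := by
    intro α hα
    have htt := TT (wordOf α) q hWq
    rw [← mderivC_eq_applyWord] at htt
    have hc2 : (fun β : Fin k → ℕ => c β *
          PF h (fun i => (Tp (h i))^[List.count i (wordOf α)] (Polynomial.X ^ (β i))) q)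
        = fun β => c β * PF h (fun i => (Tp (h i))^[α i] (Polynomial.X ^ (β i))) q := by
      funext β
      congr 1
      have hcnt : (fun i => (Tp (h i))^[List.count i (wordOf α)] (Polynomial.X ^ (β i)))
          = fun i => (Tp (h i))^[α i] (Polynomial.X ^ (β i)) := by
        funext i; rw [count_wordOf]
      rw [hcnt]
    rwa [hc2] at htt
  -- ### rewrite the LHS integrand
  have hGE : (fun h' => G h' * Complex.exp (∑ j, q j * h' j))
      = fun z => ∑ α ∈ g.support, g α * PF q (fun i => Polynomial.X ^ (α i)) z := by
    funext z
    rw [hG z, Finset.sum_mul]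
    apply Finset.sum_congr rfl
    intro α _
    have hPFq : PF q (fun i => Polynomial.X ^ (α i)) z
        = (∏ j, z j ^ α j) * Complex.exp (∑ j, q j * z j) := by
      rw [PF]
      have hpe : ∀ j : Fin k, j ∈ Finset.univ →
          pe (q j) (Polynomial.X ^ (α j)) (z j) = z j ^ α j * Complex.exp (q j * z j) := by
        intro j _; simp [pe]
      rw [Finset.prod_congr rfl hpe, Finset.prod_mul_distrib, ← Complex.exp_sum]
    rw [hPFq]; ring
  have hLfun : ∀ β : Fin k → ℕ, mderivC β (fun h' => G h' * Complex.exp (∑ j, q j * h' j))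
      = fun z => ∑ α ∈ g.support, g α *
          PF q (fun i => (Tp (q i))^[β i] (Polynomial.X ^ (α i))) z := by
    intro β
    rw [hGE]
    exact mderivC_sum_PF g.support (fun α => g α) (fun α i => Polynomial.X ^ (α i)) q β
  -- ### the symmetry
  have hsymm : ∀ (α β : Fin k → ℕ),
      PF q (fun i => (Tp (q i))^[β i] (Polynomial.X ^ (α i))) h
        = PF h (fun i => (Tp (h i))^[α i] (Polynomial.X ^ (β i))) q := by
    intro α β
    rw [PF, PF]
    exact Finset.prod_congr rfl fun i _ => pe_symm (q i) (h i) (β i) (α i)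
  -- ### conclusion
  calc (∑' β : Fin k → ℕ, c β * mderivC β (fun h' => G h' * Complex.exp (∑ j, q j * h' j)) h)
      = ∑' β : Fin k → ℕ, ∑ α ∈ g.support,
          g α * (c β * PF h (fun i => (Tp (h i))^[α i] (Polynomial.X ^ (β i))) q) := by
        apply tsum_congr
        intro β
        simp only [hLfun β]
        rw [Finset.mul_sum]
        apply Finset.sum_congr rfl
        intro α _
        rw [hsymm α β]
        ring
    _ = ∑ α ∈ g.support, ∑' β : Fin k → ℕ,
          g α * (c β * PF h (fun i => (Tp (h i))^[α i] (Polynomial.X ^ (β i))) q) := by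
        apply Summable.tsum_finsetSum
        intro α hα
        exact ((HSa α hα).summable).mul_left (g α)
    _ = ∑ β ∈ g.support, g β * mderivC β FE q := by
        apply Finset.sum_congr rfl
        intro α hα
        rw [tsum_mul_left, (HSa α hα).tsum_eq]
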